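/- If ⋀_{i∈I} (T_i → T'_i)^0 ≤ T, then there exist an index set L and types T̂_l, T̂'_l for l ∈ L such that T ≡ ⋀_{l∈L} (T̂_l → T̂'_l)^0, and for each l ∈ L there is a subset J_l ⊆ I with T̂_l ≤ T_j for all j ∈ J_l and ⋀_{j∈J_l} T̂'_j ≤ T̂'_l. -/

import Mathlib

set_option linter.unusedVariables false

-- Primitive types and term types of the unbind/rebind calculus.
mutual
inductive PrimTy : Type where
  | int : PrimTy
  | code : PrimTy
  | arrow : Ty → Ty → PrimTy
inductive Ty : Type where
  | prim : PrimTy → ℕ → Ty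
  | inter : Ty → Ty → Ty
end

/-- `T.raise k` increases all top-level conjunct levels by `k` (written `T^{+k}`). -/
def Ty.raise : Ty → ℕ → Ty
  | .prim τ ℓ, k => .prim τ (ℓ + k)
  | .inter T1 T2, k => .inter (T1.raise k) (T2.raise k)

/-- Congruence on types. -/
inductive TyEq : Ty → Ty → Prop where
  | refl : TyEq T T
  | symm : TyEq T1 T2 → TyEq T2 T1
  | trans : TyEq T1 T2 → TyEq T2 T3 → TyEq T1 T3
  | interCongr : TyEq T1 T1' → TyEq T2 T2' → TyEq (.inter T1 T2) (.inter T1' T2')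
  | arrowCongr : TyEq T1 T1' → TyEq T2 T2' →
      TyEq (.prim (.arrow T1 T2) ℓ) (.prim (.arrow T1' T2') ℓ)
  | idem : TyEq T (.inter T T)
  | comm : TyEq (.inter T1 T2) (.inter T2 T1)
  | assoc : TyEq (.inter T1 (.inter T2 T3)) (.inter (.inter T1 T2) T3)
  | distrib : TyEq (.inter (.prim (.arrow T T1) ℓ) (.prim (.arrow T T2) ℓ))
      (.prim (.arrow T (.inter T1 T2)) ℓ)
  | shift : TyEq (.prim (.arrow T' (Ty.raise T ℓ')) (ℓ+1)) (.prim (.arrow T' (Ty.raise T (ℓ'+1))) ℓ)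

/-- Subtyping on types. -/
inductive TySub : Ty → Ty → Prop where
  | int : TySub (.prim .int ℓ) (.prim .int (ℓ+1))
  | interElim : TySub (.inter T1 T2) T1
  | arrow : TySub T2 T1 → TySub T1' T2' →
      TySub (.prim (.arrow T1 T1') ℓ) (.prim (.arrow T2 T2') ℓ)
  | mono : TySub T1 T1' → TySub T2 T2' → TySub (.inter T1 T2) (.inter T1' T2')
  | trans : TySub T1 T2 → TySub T2 T3 → TySub T1 T3
  | ofEq : TyEq T1 T2 → TySub T1 T2

/-- Value types: intersections with at least one conjunct of level 0. -/
inductive IsValueTy : Ty → Prop where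
  | prim : IsValueTy (.prim τ 0)
  | inter : IsValueTy V → IsValueTy (.inter V T)

/-- `bigInter T Ts` is the intersection of the nonempty family `T :: Ts`. -/
def bigInter : Ty → List Ty → Ty
  | T, [] => T
  | T, T' :: Ts => .inter T (bigInter T' Ts)

abbrev TCtx := List (String × Ty)

/-- Terms of the unbind/rebind calculus. -/
inductive Tm : Type where
  | var : String → Tm
  | num : ℤ → Tm
  | add : Tm → Tm → Tm
  | lam : String → Tm → Tm
  | app : Tm → Tm → Tm
  | unbind : TCtx → Tm → Tm
  | rebind : Tm → List (String × Ty × Tm) → Tm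
  | error : Tm

abbrev TSubst := List (String × Ty × Tm)
abbrev USubst := List (String × Tm)

inductive IsValue : Tm → Prop where
  | lam : IsValue (.lam x t)
  | unbind : IsValue (.unbind Γ t)
  | num : IsValue (.num n)

mutual
/-- Free variables of a term. -/
def FV : Tm → Finset String
  | .var x => {x}
  | .num _ => ∅
  | .add t1 t2 => FV t1 ∪ FV t2
  | .lam x t => FV t \ {x}
  | .app t1 t2 => FV t1 ∪ FV t2
  | .unbind Γ' t => FV t \ (Γ'.map Prod.fst).toFinset
  | .rebind t r => FV t ∪ FVr r
  | .error => ∅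
/-- Free variables of a typed substitution. -/
def FVr : List (String × Ty × Tm) → Finset String
  | [] => ∅
  | p :: r => FV p.2.2 ∪ FVr r
end

/-- Free variables of an untyped substitution. -/
def FVu (σ : USubst) : Finset String := σ.foldr (fun p acc => FV p.2 ∪ acc) ∅

mutual
/-- `SubstM t σ t'` : the (capture-avoiding, partial) application of the
substitution `σ` to `t` is defined and equals `t'`. -/
inductive SubstM : Tm → USubst → Tm → Prop where
  | varHit : σ.lookup x = some v → SubstM (.var x) σ v
  | varMiss : σ.lookup x = none → SubstM (.var x) σ (.var x)
  | num : SubstM (.num n) σ (.num n)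
  | error : SubstM .error σ .error
  | add : SubstM t1 σ t1' → SubstM t2 σ t2' → SubstM (.add t1 t2) σ (.add t1' t2')
  | app : SubstM t1 σ t1' → SubstM t2 σ t2' → SubstM (.app t1 t2) σ (.app t1' t2')
  | lam : x ∉ FVu σ → SubstM t (σ.filter (fun p => p.1 != x)) t' →
      SubstM (.lam x t) σ (.lam x t')
  | unbind : (∀ y ∈ Γ'.map Prod.fst, y ∉ FVu σ) →
      SubstM t (σ.filter (fun p => !(Γ'.map Prod.fst).contains p.1)) t' →
      SubstM (.unbind Γ' t) σ (.unbind Γ' t')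
  | rebind : SubstM t σ t' → SubstML r σ r' → SubstM (.rebind t r) σ (.rebind t' r')
inductive SubstML : TSubst → USubst → TSubst → Prop where
  | nil : SubstML [] σ []
  | cons : SubstM u σ u' → SubstML r σ r' → SubstML ((x,T,u) :: r) σ ((x,T,u') :: r')
end

mutual
/-- The intersection type system with levels. -/
inductive Typed : TCtx → Tm → Ty → Prop where
  | var : Γ.lookup x = some T → Typed Γ (.var x) T
  | num : Typed Γ (.num n) (.prim .int 0)
  | sum : Typed Γ t1 (.prim .int ℓ) → Typed Γ t2 (.prim .int ℓ) →
      Typed Γ (.add t1 t2) (.prim .int ℓ)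
  | error : Typed Γ .error T
  | abs : Γ.lookup x = none → Typed ((x,T) :: Γ) t T' →
      Typed Γ (.lam x t) (.prim (.arrow T T') 0)
  | app : Typed Γ t1 (.prim (.arrow V T) 0) → IsValueTy V → Typed Γ t2 V →
      Typed Γ (.app t1 t2) T
  | unbind0 : (∀ x ∈ Γ'.map Prod.fst, Γ.lookup x = none) → Typed (Γ' ++ Γ) t T →
      Typed Γ (.unbind Γ' t) (.prim .code 0)
  | unbind : (∀ x ∈ Γ'.map Prod.fst, Γ.lookup x = none) → Typed (Γ' ++ Γ) t T →
      Typed Γ (.unbind Γ' t) (T.raise 1)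
  | rebind : Typed Γ t (T.raise 1) → SubstOk Γ r → Typed Γ (.rebind t r) T
  | inter : Typed Γ t T1 → Typed Γ t T2 → Typed Γ t (.inter T1 T2)
  | sub : Typed Γ t T → TySub T T' → Typed Γ t T'
/-- `SubstOk Γ r` : the typed substitution `r` is well typed in `Γ`. -/
inductive SubstOk : TCtx → TSubst → Prop where
  | nil : SubstOk Γ []
  | cons : Typed Γ u V → IsValueTy V → TySub V T → SubstOk Γ r →
      SubstOk Γ ((x,T,u) :: r)
end

/-- All terms of a typed substitution are values. -/
def IsValSubst (r : TSubst) : Prop := ∀ p ∈ r, IsValue p.2.2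

/-- `Γ' ⊆` the type context extracted from `r`. -/
def CtxSub (Γ' : TCtx) (r : TSubst) : Prop := ∀ x T, (x,T) ∈ Γ' → ∃ u, (x,T,u) ∈ r

/-- The untyped substitution extracted from `r`, restricted to variables in `xs`. -/
def restrictTo (r : TSubst) (xs : List String) : USubst :=
  (r.filter (fun p => xs.contains p.1)).map (fun p => (p.1, p.2.2))

/-- Evaluation contexts. -/
inductive ECtx : Type where
  | hole : ECtx
  | addL : ECtx → Tm → ECtx
  | addR : ℤ → ECtx → ECtx
  | appL : ECtx → Tm → ECtx
  | appR : Tm → ECtx → ECtx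
  | reb : Tm → TSubst → String → Ty → ECtx → ECtx

def plug : ECtx → Tm → Tm
  | .hole, u => u
  | .addL E t, u => .add (plug E u) t
  | .addR n E, u => .add (.num n) (plug E u)
  | .appL E t, u => .app (plug E u) t
  | .appR v E, u => .app v (plug E u)
  | .reb t r x T E, u => .rebind t (r ++ [(x, T, plug E u)])

/-- Well-formed evaluation contexts (`v E` requires `v` a value). -/
inductive IsECtx : ECtx → Prop where
  | hole : IsECtx .hole
  | addL : IsECtx E → IsECtx (.addL E t)
  | addR : IsECtx E → IsECtx (.addR n E)
  | appL : IsECtx E → IsECtx (.appL E t)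
  | appR : IsValue v → IsECtx E → IsECtx (.appR v E)
  | reb : IsECtx E → IsECtx (.reb t r x T E)

/-- Call-by-value reduction. -/
inductive Step : Tm → Tm → Prop where
  | sum : Step (.add (.num n1) (.num n2)) (.num (n1 + n2))
  | app : IsValue v → SubstM t [(x, v)] t' → Step (.app (.lam x t) v) t'
  | rebindUnbindYes : IsValSubst r → CtxSub Γ' r →
      SubstM t (restrictTo r (Γ'.map Prod.fst)) t' →
      Step (.rebind (.unbind Γ' t) r) t'
  | rebindUnbindNo : IsValSubst r → ¬ CtxSub Γ' r →
      Step (.rebind (.unbind Γ' t) r) .error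
  | rebindNum : IsValSubst r → Step (.rebind (.num n) r) (.num n)
  | rebindSum : IsValSubst r →
      Step (.rebind (.add t1 t2) r) (.add (.rebind t1 r) (.rebind t2 r))
  | rebindAbs : IsValSubst r → Step (.rebind (.lam x t) r) (.lam x (.rebind t r))
  | rebindApp : IsValSubst r →
      Step (.rebind (.app t1 t2) r) (.app (.rebind t1 r) (.rebind t2 r))
  | rebindRebind : IsValSubst rv → Step (.rebind t r) t' →
      Step (.rebind (.rebind t r) rv) (.rebind t' rv)
  | rebindError : IsValSubst r → Step (.rebind .error r) .error
  | ctx : E ≠ .hole → IsECtx E → Step t t' → Step (plug E t) (plug E t')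
  | ctxError : E ≠ .hole → IsECtx E → Step t .error → Step (plug E t) .error

/-- Level-0 arrow type from a pair of types. -/
def arr0 (p : Ty × Ty) : Ty := .prim (.arrow p.1 p.2) 0

/-- Primitive type with a level. -/
def primL (p : PrimTy × ℕ) : Ty := .prim p.1 p.2

-- auxiliary development (to be inserted before stmt1)
namespace Stmt1Aux

theorem raise_zero : ∀ T : Ty, T.raise 0 = T
  | .prim τ ℓ => rfl
  | .inter a b => by simp [Ty.raise, raise_zero a, raise_zero b]

theorem raise_raise : ∀ (T : Ty) (a b : ℕ), (T.raise a).raise b = T.raise (a + b)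
  | .prim τ ℓ, a, b => by simp [Ty.raise, Nat.add_assoc]
  | .inter x y, a, b => by simp [Ty.raise, raise_raise x, raise_raise y]

theorem raise_eq {T T' : Ty} (h : TyEq T T') (k : ℕ) : TyEq (T.raise k) (T'.raise k) := by
  induction h generalizing k with
  | refl => exact TyEq.refl
  | symm _ ih => exact (ih k).symm
  | trans _ _ ih1 ih2 => exact (ih1 k).trans (ih2 k)
  | interCongr _ _ ih1 ih2 => exact TyEq.interCongr (ih1 k) (ih2 k)
  | arrowCongr h1 h2 => exact TyEq.arrowCongr h1 h2
  | idem => exact TyEq.idem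
  | comm => exact TyEq.comm
  | assoc => exact TyEq.assoc
  | distrib => exact TyEq.distrib
  | @shift T' T ℓ' ℓ =>
      show TyEq (.prim (.arrow T' (T.raise ℓ')) (ℓ+1+k)) (.prim (.arrow T' (T.raise (ℓ'+1))) (ℓ+k))
      have : ℓ + 1 + k = (ℓ + k) + 1 := by omega
      rw [this]
      exact TyEq.shift

theorem raise_sub {T T' : Ty} (h : TySub T T') (k : ℕ) : TySub (T.raise k) (T'.raise k) := by
  induction h generalizing k with
  | @int ℓ =>
      show TySub (.prim .int (ℓ+k)) (.prim .int (ℓ+1+k))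
      have : ℓ + 1 + k = (ℓ + k) + 1 := by omega
      rw [this]; exact TySub.int
  | interElim => exact TySub.interElim
  | arrow h1 h2 ih1 ih2 => exact TySub.arrow h1 h2
  | mono _ _ ih1 ih2 => exact TySub.mono (ih1 k) (ih2 k)
  | trans _ _ ih1 ih2 => exact (ih1 k).trans (ih2 k)
  | ofEq h => exact TySub.ofEq (raise_eq h k)

theorem tysub_refl (T : Ty) : TySub T T := TySub.ofEq TyEq.refl

/-- any arrow is congruent to its level-0 normalization -/
theorem shift0 (a b : Ty) : ∀ ℓ : ℕ, TyEq (.prim (.arrow a b) ℓ) (.prim (.arrow a (b.raise ℓ)) 0)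
  | 0 => by rw [raise_zero]; exact TyEq.refl
  | (ℓ+1) => by
      have h1 : TyEq (.prim (.arrow a (b.raise 0)) (ℓ+1)) (.prim (.arrow a (b.raise 1)) ℓ) :=
        TyEq.shift
      rw [raise_zero] at h1
      have h2 := shift0 a (b.raise 1) ℓ
      rw [raise_raise] at h2
      have : 1 + ℓ = ℓ + 1 := by omega
      rw [this] at h2
      exact h1.trans h2

/-- flatten a type into its list of top-level atoms -/
def conj : Ty → List Ty
  | .prim τ ℓ => [.prim τ ℓ]
  | .inter a b => conj a ++ conj b

theorem conj_ne : ∀ T : Ty, conj T ≠ []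
  | .prim τ ℓ => by simp [conj]
  | .inter a b => by
      intro h
      exact conj_ne a (List.append_eq_nil_iff.mp h).1

/-- bigInter over a list, with junk value on [] -/
def bigI : List Ty → Ty
  | [] => .prim .int 0
  | T :: Ts => bigInter T Ts

theorem bigI_cons (a : Ty) (l : List Ty) (h : l ≠ []) :
    bigI (a :: l) = .inter a (bigI l) := by
  cases l with
  | nil => exact absurd rfl h
  | cons b t => rfl

theorem bigI_append : ∀ (l1 l2 : List Ty), l1 ≠ [] → l2 ≠ [] →
    TyEq (.inter (bigI l1) (bigI l2)) (bigI (l1 ++ l2))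
  | [], l2, h1, h2 => absurd rfl h1
  | [a], l2, h1, h2 => by
      rw [show ([a] : List Ty) ++ l2 = a :: l2 from rfl, bigI_cons a l2 h2]
      exact TyEq.refl
  | (a :: b :: t), l2, h1, h2 => by
      have hne : (b :: t : List Ty) ≠ [] := by simp
      have hne2 : (b :: t) ++ l2 ≠ [] := by simp
      rw [bigI_cons a _ hne, List.cons_append, bigI_cons a _ hne2]
      have ih := bigI_append (b :: t) l2 hne h2
      exact (TyEq.assoc.symm).trans (TyEq.interCongr TyEq.refl ih)

theorem eq_conj : ∀ T : Ty, TyEq T (bigI (conj T))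
  | .prim τ ℓ => TyEq.refl
  | .inter a b => by
      have ih1 := eq_conj a
      have ih2 := eq_conj b
      exact (TyEq.interCongr ih1 ih2).trans
        (bigI_append (conj a) (conj b) (conj_ne a) (conj_ne b))

theorem bigI_sub_mem : ∀ (l : List Ty) (x : Ty), x ∈ l → TySub (bigI l) x
  | [], x, h => absurd h (by simp)
  | a :: t, x, h => by
      rcases List.mem_cons.mp h with h | h
      · subst h
        cases t with
        | nil => exact tysub_refl _
        | cons b s => exact TySub.interElim
      · have hne : t ≠ [] := by rintro rfl; simp at h
        rw [bigI_cons a t hne]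
        exact ((TySub.ofEq TyEq.comm).trans TySub.interElim).trans (bigI_sub_mem t x h)

theorem sub_bigI : ∀ (l : List Ty) (S : Ty), l ≠ [] → (∀ x ∈ l, TySub S x) → TySub S (bigI l)
  | [], S, h, _ => absurd rfl h
  | [a], S, _, hall => hall a (by simp)
  | a :: b :: t, S, _, hall => by
      have hne : (b :: t : List Ty) ≠ [] := by simp
      rw [bigI_cons a _ hne]
      have h1 : TySub S a := hall a (by simp)
      have h2 : TySub S (bigI (b :: t)) :=
        sub_bigI (b :: t) S hne (fun x hx => hall x (by simp [hx]))
      exact (TySub.ofEq TyEq.idem).trans (TySub.mono h1 h2)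

theorem bigI_sub_subset (l l' : List Ty) (h1 : l' ≠ []) (h2 : ∀ x ∈ l', x ∈ l) :
    TySub (bigI l) (bigI l') :=
  sub_bigI l' (bigI l) h1 (fun x hx => bigI_sub_mem l x (h2 x hx))

theorem bigI_eq_pointwise : ∀ {l l' : List Ty}, List.Forall₂ TyEq l l' → TyEq (bigI l) (bigI l')
  | [], [], _ => TyEq.refl
  | a :: t, b :: s, h => by
      rcases h with _ | ⟨hab, hts⟩
      cases t with
      | nil => cases hts; exact hab
      | cons c t2 =>
        have hlen := List.Forall₂.length_eq hts
        have hne : s ≠ [] := by rintro rfl; simp at hlen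
        rw [bigI_cons a _ (by simp), bigI_cons b _ hne]
        exact TyEq.interCongr hab (bigI_eq_pointwise hts)

/-- generation of an atom from a list of atoms -/
def Gen (L : List Ty) (m : Ty) : Prop :=
  match m with
  | .prim .int ℓ => ∃ ℓ0, ℓ0 ≤ ℓ ∧ Ty.prim .int ℓ0 ∈ L
  | .prim .code ℓ => Ty.prim .code ℓ ∈ L
  | .prim (.arrow a b) ℓ =>
      ∃ (k : Ty × Ty × ℕ) (ks : List (Ty × Ty × ℕ)),
        (∀ x ∈ k :: ks, Ty.prim (.arrow x.1 x.2.1) x.2.2 ∈ L ∧ TySub a x.1) ∧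
        TySub (bigI ((k :: ks).map (fun x => x.2.1.raise x.2.2))) (b.raise ℓ)
  | .inter _ _ => m ∈ L

theorem Gen_of_mem {L : List Ty} {m : Ty} (h : m ∈ L) : Gen L m := by
  match m with
  | .prim .int ℓ => exact ⟨ℓ, le_refl _, h⟩
  | .prim .code ℓ => exact h
  | .prim (.arrow a b) ℓ =>
      exact ⟨(a, b, ℓ), [], fun x hx => by simp at hx; subst hx; exact ⟨h, tysub_refl _⟩,
        tysub_refl _⟩
  | .inter a b => exact h

theorem Gen_mono {L L' : List Ty} {m : Ty} (h : Gen L m) (hsub : ∀ x ∈ L, x ∈ L') : Gen L' m := by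
  match m with
  | .prim .int ℓ => obtain ⟨ℓ0, h1, h2⟩ := h; exact ⟨ℓ0, h1, hsub _ h2⟩
  | .prim .code ℓ => exact hsub _ h
  | .prim (.arrow a b) ℓ =>
      obtain ⟨k, ks, h1, h2⟩ := h
      exact ⟨k, ks, fun x hx => ⟨hsub _ (h1 x hx).1, (h1 x hx).2⟩, h2⟩
  | .inter a b => exact hsub _ h

theorem Gen_comp {L1 L2 : List Ty} {m : Ty} (hall : ∀ x ∈ L2, Gen L1 x) (h : Gen L2 m) :
    Gen L1 m := by
  match m with
  | .prim .int ℓ =>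
      obtain ⟨ℓ0, h1, h2⟩ := h
      obtain ⟨ℓ1, h3, h4⟩ := hall _ h2
      exact ⟨ℓ1, le_trans h3 h1, h4⟩
  | .prim .code ℓ => exact hall _ h
  | .prim (.arrow a b) ℓ =>
      obtain ⟨k, ks, h1, h2⟩ := h
      have hchoice : ∀ x ∈ k :: ks, ∃ Kx : List (Ty × Ty × ℕ), Kx ≠ [] ∧
          (∀ y ∈ Kx, Ty.prim (.arrow y.1 y.2.1) y.2.2 ∈ L1 ∧ TySub a y.1) ∧
          TySub (bigI (Kx.map (fun y => y.2.1.raise y.2.2))) (x.2.1.raise x.2.2) := by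
        intro x hx
        obtain ⟨k', ks', hk1, hk2⟩ := hall _ (h1 x hx).1
        refine ⟨k' :: ks', by simp, fun y hy => ⟨(hk1 y hy).1, (h1 x hx).2.trans (hk1 y hy).2⟩, hk2⟩
      have main : ∀ (l : List (Ty × Ty × ℕ)), l ≠ [] → (∀ x ∈ l, x ∈ k :: ks) →
          ∃ K : List (Ty × Ty × ℕ), K ≠ [] ∧
            (∀ y ∈ K, Ty.prim (.arrow y.1 y.2.1) y.2.2 ∈ L1 ∧ TySub a y.1) ∧
            TySub (bigI (K.map (fun y => y.2.1.raise y.2.2)))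
              (bigI (l.map (fun x => x.2.1.raise x.2.2))) := by
        intro l
        induction l with
        | nil => intro h; exact absurd rfl h
        | cons x t ih =>
          intro _ hsub
          obtain ⟨Kx, hKx1, hKx2, hKx3⟩ := hchoice x (hsub x (by simp))
          cases t with
          | nil => exact ⟨Kx, hKx1, hKx2, by simpa [bigI, bigInter] using hKx3⟩
          | cons z zs =>
            obtain ⟨K', hK'1, hK'2, hK'3⟩ := ih (by simp) (fun y hy => hsub y (by simp [hy]))
            refine ⟨Kx ++ K', by simp [hKx1], ?_, ?_⟩
            · intro y hy
              rcases List.mem_append.mp hy with hy | hy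
              · exact hKx2 y hy
              · exact hK'2 y hy
            · rw [List.map_cons, bigI_cons _ _ (by simp), List.map_append]
              have hmapne : Kx.map (fun y => y.2.1.raise y.2.2) ≠ [] := by simpa using hKx1
              have hmapne' : K'.map (fun y => y.2.1.raise y.2.2) ≠ [] := by simpa using hK'1
              have s1 : TySub
                  (bigI (Kx.map (fun y => y.2.1.raise y.2.2) ++ K'.map (fun y => y.2.1.raise y.2.2)))
                  (bigI (Kx.map (fun y => y.2.1.raise y.2.2))) :=
                bigI_sub_subset _ _ hmapne (fun x hx => List.mem_append_left _ hx)
              have s2 : TySub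
                  (bigI (Kx.map (fun y => y.2.1.raise y.2.2) ++ K'.map (fun y => y.2.1.raise y.2.2)))
                  (bigI (K'.map (fun y => y.2.1.raise y.2.2))) :=
                bigI_sub_subset _ _ hmapne' (fun x hx => List.mem_append_right _ hx)
              exact (TySub.ofEq TyEq.idem).trans
                (TySub.mono (s1.trans hKx3) (s2.trans hK'3))
      obtain ⟨K, hK1, hK2, hK3⟩ := main (k :: ks) (by simp) (fun x hx => hx)
      cases K with
      | nil => exact absurd rfl hK1
      | cons kh kt => exact ⟨kh, kt, hK2, hK3.trans h2⟩
  | .inter a b => exact hall _ h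


theorem eqInv {T T' : Ty} (h : TyEq T T') :
    (∀ m ∈ conj T, Gen (conj T') m) ∧ (∀ m ∈ conj T', Gen (conj T) m) := by
  induction h with
  | refl => exact ⟨fun m hm => Gen_of_mem hm, fun m hm => Gen_of_mem hm⟩
  | symm _ ih => exact ⟨ih.2, ih.1⟩
  | trans _ _ ih1 ih2 =>
      exact ⟨fun m hm => Gen_comp ih2.1 (ih1.1 m hm),
             fun m hm => Gen_comp ih1.2 (ih2.2 m hm)⟩
  | @interCongr T1 T1' T2 T2' _ _ ih1 ih2 =>
      constructor
      · intro m hm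
        rcases List.mem_append.mp hm with hm | hm
        · exact Gen_mono (ih1.1 m hm) (fun x hx => List.mem_append_left _ hx)
        · exact Gen_mono (ih2.1 m hm) (fun x hx => List.mem_append_right _ hx)
      · intro m hm
        rcases List.mem_append.mp hm with hm | hm
        · exact Gen_mono (ih1.2 m hm) (fun x hx => List.mem_append_left _ hx)
        · exact Gen_mono (ih2.2 m hm) (fun x hx => List.mem_append_right _ hx)
  | @arrowCongr T1 T1' T2 T2' ℓ h1 h2 =>
      constructor
      · intro m hm
        simp only [conj, List.mem_singleton] at hm
        subst hm
        exact ⟨(T1', T2', ℓ), [],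
          fun x hx => by simp at hx; subst hx; exact ⟨by simp [conj], TySub.ofEq h1⟩,
          TySub.ofEq (raise_eq h2.symm ℓ)⟩
      · intro m hm
        simp only [conj, List.mem_singleton] at hm
        subst hm
        exact ⟨(T1, T2, ℓ), [],
          fun x hx => by simp at hx; subst hx; exact ⟨by simp [conj], TySub.ofEq h1.symm⟩,
          TySub.ofEq (raise_eq h2 ℓ)⟩
  | @idem T =>
      constructor
      · intro m hm
        exact Gen_of_mem (show m ∈ conj (Ty.inter T T) from List.mem_append_left _ hm)
      · intro m hm
        rcases List.mem_append.mp hm with hm | hm <;> exact Gen_of_mem hm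
  | @comm T1 T2 =>
      constructor
      · intro m hm
        rcases List.mem_append.mp hm with hm | hm
        · exact Gen_of_mem (List.mem_append_right _ hm)
        · exact Gen_of_mem (List.mem_append_left _ hm)
      · intro m hm
        rcases List.mem_append.mp hm with hm | hm
        · exact Gen_of_mem (List.mem_append_right _ hm)
        · exact Gen_of_mem (List.mem_append_left _ hm)
  | @assoc T1 T2 T3 =>
      constructor
      · intro m hm
        apply Gen_of_mem
        show m ∈ (conj T1 ++ conj T2) ++ conj T3
        rw [List.append_assoc]
        exact hm
      · intro m hm
        apply Gen_of_mem
        show m ∈ conj T1 ++ (conj T2 ++ conj T3)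
        rw [← List.append_assoc]
        exact hm
  | @distrib T T1 ℓ T2 =>
      constructor
      · intro m hm
        rcases List.mem_append.mp hm with hm | hm <;>
          simp only [conj, List.mem_singleton] at hm <;> subst hm
        · exact ⟨(T, Ty.inter T1 T2, ℓ), [],
            fun x hx => by simp at hx; subst hx; exact ⟨by simp [conj], tysub_refl _⟩,
            show TySub (Ty.inter (T1.raise ℓ) (T2.raise ℓ)) (T1.raise ℓ) from TySub.interElim⟩
        · exact ⟨(T, Ty.inter T1 T2, ℓ), [],
            fun x hx => by simp at hx; subst hx; exact ⟨by simp [conj], tysub_refl _⟩,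
            show TySub (Ty.inter (T1.raise ℓ) (T2.raise ℓ)) (T2.raise ℓ) from
              (TySub.ofEq TyEq.comm).trans TySub.interElim⟩
      · intro m hm
        simp only [conj, List.mem_singleton] at hm
        subst hm
        refine ⟨(T, T1, ℓ), [(T, T2, ℓ)], ?_, ?_⟩
        · intro x hx
          rcases List.mem_cons.mp hx with hx | hx
          · subst hx; exact ⟨by simp [conj], tysub_refl _⟩
          · simp at hx; subst hx; exact ⟨by simp [conj], tysub_refl _⟩
        · exact tysub_refl _
  | @shift T' T ℓ' ℓ =>
      constructor
      · intro m hm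
        simp only [conj, List.mem_singleton] at hm
        subst hm
        refine ⟨(T', T.raise (ℓ'+1), ℓ), [],
          fun x hx => by simp at hx; subst hx; exact ⟨by simp [conj], tysub_refl _⟩, ?_⟩
        show TySub ((T.raise (ℓ'+1)).raise ℓ) ((T.raise ℓ').raise (ℓ+1))
        rw [raise_raise, raise_raise, show ℓ' + 1 + ℓ = ℓ' + (ℓ + 1) by omega]
        exact tysub_refl _
      · intro m hm
        simp only [conj, List.mem_singleton] at hm
        subst hm
        refine ⟨(T', T.raise ℓ', ℓ+1), [],
          fun x hx => by simp at hx; subst hx; exact ⟨by simp [conj], tysub_refl _⟩, ?_⟩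
        show TySub ((T.raise ℓ').raise (ℓ+1)) ((T.raise (ℓ'+1)).raise ℓ)
        rw [raise_raise, raise_raise, show ℓ' + (ℓ + 1) = ℓ' + 1 + ℓ by omega]
        exact tysub_refl _

theorem subInv {T T' : Ty} (h : TySub T T') : ∀ m ∈ conj T', Gen (conj T) m := by
  induction h with
  | @int ℓ =>
      intro m hm
      simp only [conj, List.mem_singleton] at hm
      subst hm
      exact ⟨ℓ, by omega, by simp [conj]⟩
  | @interElim T1 T2 =>
      intro m hm
      exact Gen_of_mem (show m ∈ conj T1 ++ conj T2 from List.mem_append_left _ hm)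
  | @arrow T2 T1 T1' T2' ℓ h1 h2 ih1 ih2 =>
      intro m hm
      simp only [conj, List.mem_singleton] at hm
      subst hm
      exact ⟨(T1, T1', ℓ), [],
        fun x hx => by simp at hx; subst hx; exact ⟨by simp [conj], h1⟩,
        raise_sub h2 ℓ⟩
  | @mono T1 T1' T2 T2' _ _ ih1 ih2 =>
      intro m hm
      rcases List.mem_append.mp hm with hm | hm
      · exact Gen_mono (ih1 m hm) (fun x hx => List.mem_append_left _ hx)
      · exact Gen_mono (ih2 m hm) (fun x hx => List.mem_append_right _ hx)
  | trans _ _ ih1 ih2 =>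
      intro m hm
      exact Gen_comp ih1 (ih2 m hm)
  | ofEq h => exact (eqInv h).2

theorem conj_bigInter_arr0 : ∀ (p : Ty × Ty) (ps : List (Ty × Ty)),
    conj (bigInter (arr0 p) (ps.map arr0)) = (p :: ps).map arr0
  | p, [] => rfl
  | p, q :: qs => by
      show conj (.inter (arr0 p) (bigInter (arr0 q) (qs.map arr0))) = _
      show conj (arr0 p) ++ conj (bigInter (arr0 q) (qs.map arr0)) = _
      rw [conj_bigInter_arr0 q qs]
      rfl

/-- extract a level-0 presentation from a generated atom -/
theorem gen_extract (F : List (Ty × Ty)) (m : Ty) (hm : Gen (F.map arr0) m) :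
    ∃ q : Ty × Ty, TyEq m (arr0 q) ∧
      ∃ (j : Ty × Ty) (js : List (Ty × Ty)),
        (∀ a ∈ j :: js, a ∈ F) ∧ (∀ a ∈ j :: js, TySub q.1 a.1) ∧
        TySub (bigInter j.2 (js.map Prod.snd)) q.2 := by
  match m with
  | .prim .int ℓ =>
      obtain ⟨ℓ0, _, h2⟩ := hm
      obtain ⟨f, _, hf⟩ := List.mem_map.mp h2
      exact absurd hf (by simp [arr0])
  | .prim .code ℓ =>
      obtain ⟨f, _, hf⟩ := List.mem_map.mp hm
      exact absurd hf (by simp [arr0])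
  | .inter a b =>
      obtain ⟨f, _, hf⟩ := List.mem_map.mp hm
      exact absurd hf (by simp [arr0])
  | .prim (.arrow a b) ℓ =>
      obtain ⟨k, ks, h1, h2⟩ := hm
      have hprop : ∀ x ∈ k :: ks, (x.1, x.2.1) ∈ F ∧ x.2.2 = 0 ∧ TySub a x.1 := by
        intro x hx
        obtain ⟨hmem, hsub⟩ := h1 x hx
        obtain ⟨f, hf1, hf2⟩ := List.mem_map.mp hmem
        simp only [arr0] at hf2
        injection hf2 with hf3 hf4
        injection hf3 with hf5 hf6
        exact ⟨by rw [← hf5, ← hf6]; exact hf1, hf4.symm, hsub⟩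
      refine ⟨(a, b.raise ℓ), shift0 a b ℓ, (k.1, k.2.1), ks.map (fun x => (x.1, x.2.1)), ?_, ?_, ?_⟩
      · intro x hx
        rcases List.mem_cons.mp hx with hx | hx
        · subst hx; exact (hprop k (by simp)).1
        · obtain ⟨y, hy1, hy2⟩ := List.mem_map.mp hx
          subst hy2
          exact (hprop y (by simp [hy1])).1
      · intro x hx
        rcases List.mem_cons.mp hx with hx | hx
        · subst hx; exact (hprop k (by simp)).2.2
        · obtain ⟨y, hy1, hy2⟩ := List.mem_map.mp hx
          subst hy2
          exact (hprop y (by simp [hy1])).2.2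
      · have e1 : k.2.1.raise k.2.2 = k.2.1 := by
          rw [(hprop k (by simp)).2.1]; exact raise_zero _
        have e2 : ks.map (fun x => x.2.1.raise x.2.2) = ks.map (fun x => x.2.1) :=
          List.map_congr_left (fun x hx => by
            rw [(hprop x (by simp [hx])).2.1]; exact raise_zero _)
        have hl : (k :: ks).map (fun x => x.2.1.raise x.2.2)
            = k.2.1 :: ks.map (fun x => x.2.1) := by
          rw [List.map_cons, e1, e2]
        rw [hl] at h2
        have h2' : TySub (bigInter k.2.1 (ks.map (fun x => x.2.1))) (b.raise ℓ) := h2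
        show TySub (bigInter k.2.1 ((ks.map (fun x => (x.1, x.2.1))).map Prod.snd)) (b.raise ℓ)
        rw [List.map_map]
        exact h2'


end Stmt1Aux

/-- inversion of subtyping for intersections of level-0 arrows. -/
theorem stmt1 (p : Ty × Ty) (ps : List (Ty × Ty)) (T : Ty)
    (h : TySub (bigInter (arr0 p) (ps.map arr0)) T) :
    ∃ (q : Ty × Ty) (qs : List (Ty × Ty)),
      TyEq T (bigInter (arr0 q) (qs.map arr0)) ∧
      ∀ l ∈ q :: qs, ∃ (j : Ty × Ty) (js : List (Ty × Ty)),
        (∀ a ∈ j :: js, a ∈ p :: ps) ∧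
        (∀ a ∈ j :: js, TySub l.1 a.1) ∧
        TySub (bigInter j.2 (js.map Prod.snd)) l.2 := by
  have hg : ∀ m ∈ Stmt1Aux.conj T, Stmt1Aux.Gen ((p :: ps).map arr0) m := by
    have h2 := Stmt1Aux.subInv h
    rwa [Stmt1Aux.conj_bigInter_arr0] at h2
  have extract : ∀ (ms : List Ty), (∀ m ∈ ms, Stmt1Aux.Gen ((p :: ps).map arr0) m) →
      ∃ qs : List (Ty × Ty), List.Forall₂ (fun m q => TyEq m (arr0 q)) ms qs ∧
        ∀ l ∈ qs, ∃ (j : Ty × Ty) (js : List (Ty × Ty)),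
          (∀ a ∈ j :: js, a ∈ p :: ps) ∧ (∀ a ∈ j :: js, TySub l.1 a.1) ∧
          TySub (bigInter j.2 (js.map Prod.snd)) l.2 := by
    intro ms
    induction ms with
    | nil => intro _; exact ⟨[], List.Forall₂.nil, by simp⟩
    | cons m t ih =>
      intro hall
      obtain ⟨qs, h1, h2⟩ := ih (fun x hx => hall x (by simp [hx]))
      obtain ⟨q, hq1, hq2⟩ := Stmt1Aux.gen_extract _ m (hall m (by simp))
      refine ⟨q :: qs, List.Forall₂.cons hq1 h1, ?_⟩
      intro l hl
      rcases List.mem_cons.mp hl with hl | hl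
      · subst hl; exact hq2
      · exact h2 l hl
  obtain ⟨qs0, hf, hcond⟩ := extract (Stmt1Aux.conj T) hg
  cases qs0 with
  | nil =>
      have hlen := hf.length_eq
      simp at hlen
      exact absurd hlen (Stmt1Aux.conj_ne T)
  | cons q qs =>
      refine ⟨q, qs, ?_, fun l hl => hcond l hl⟩
      have e1 : TyEq T (Stmt1Aux.bigI (Stmt1Aux.conj T)) := Stmt1Aux.eq_conj T
      have hf2 : List.Forall₂ TyEq (Stmt1Aux.conj T) ((q :: qs).map arr0) :=
        List.forall₂_map_right_iff.mpr hf
      have e2 := Stmt1Aux.bigI_eq_pointwise hf2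
      exact e1.trans e2
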